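/- Sector condition bound on capacity: if the generator L of an irreducible finite Markov chain satisfies ⟨Lf, g⟩_μ² ≤ C₀ ⟨(−L)f, f⟩_μ ⟨(−L)g, g⟩_μ for all f, g, then for all disjoint subsets A, B: Cap^s(A,B) ≤ Cap(A,B) ≤ C₀ Cap^s(A,B), where Cap^s is the capacity of the reversible chain with generator S = (L+L*)/2. -/

import Mathlib

open Finset

/-- The generator associated to jump rates `q`: `(L f)(x) = ∑ y, q x y * (f y - f x)`. -/
noncomputable def Ld {E : Type*} [Fintype E] (q : E → E → ℝ) (f : E → ℝ) (x : E) : ℝ :=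
  ∑ y, q x y * (f y - f x)

/-- The adjoint jump rates: `r* x y = μ y * r y x / μ x`. -/
noncomputable def adjRates {E : Type*} (r : E → E → ℝ) (μ : E → ℝ) : E → E → ℝ :=
  fun x y => μ y * r y x / μ x

/-- The symmetric part of the generator: `S = (L + L*) / 2`. -/
noncomputable def symOp {E : Type*} [Fintype E] (r : E → E → ℝ) (μ : E → ℝ)
    (f : E → ℝ) (x : E) : ℝ :=
  (Ld r f x + Ld (adjRates r μ) f x) / 2

section Aux
variable {E : Type*} [Fintype E]

lemma key_swap (r : E → E → ℝ) (μ : E → ℝ)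
    (hstat : ∀ y, ∑ x, μ x * r x y = μ y * ∑ x, r y x) (φ : E → ℝ) :
    ∑ x, ∑ y, μ x * r x y * φ y = ∑ x, ∑ y, μ x * r x y * φ x := by
  rw [Finset.sum_comm]
  refine Finset.sum_congr rfl fun a _ => ?_
  calc ∑ x, μ x * r x a * φ a = (∑ x, μ x * r x a) * φ a := by rw [Finset.sum_mul]
    _ = (μ a * ∑ x, r a x) * φ a := by rw [hstat]
    _ = ∑ y, μ a * r a y * φ a := by rw [Finset.mul_sum, Finset.sum_mul]

lemma sum_Ld_eq (r : E → E → ℝ) (μ : E → ℝ) (f g : E → ℝ) :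
    ∑ x, μ x * Ld r f x * g x = ∑ x, ∑ y, μ x * r x y * ((f y - f x) * g x) := by
  refine Finset.sum_congr rfl fun x _ => ?_
  rw [Ld, Finset.mul_sum, Finset.sum_mul]
  exact Finset.sum_congr rfl fun y _ => by ring

lemma sum_Ld_adj_eq (r : E → E → ℝ) (μ : E → ℝ) (hμ : ∀ x, 0 < μ x) (f g : E → ℝ) :
    ∑ x, μ x * Ld (adjRates r μ) f x * g x
      = ∑ x, ∑ y, μ y * r y x * ((f y - f x) * g x) := by
  refine Finset.sum_congr rfl fun x _ => ?_
  rw [Ld, Finset.mul_sum, Finset.sum_mul]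
  refine Finset.sum_congr rfl fun y _ => ?_
  have hx : μ x ≠ 0 := (hμ x).ne'
  rw [adjRates]
  field_simp

lemma adj_pair (r : E → E → ℝ) (μ : E → ℝ) (hμ : ∀ x, 0 < μ x)
    (hstat : ∀ y, ∑ x, μ x * r x y = μ y * ∑ x, r y x) (F H : E → ℝ) :
    ∑ x, μ x * Ld (adjRates r μ) F x * H x = ∑ x, μ x * Ld r H x * F x := by
  rw [sum_Ld_adj_eq r μ hμ, sum_Ld_eq, Finset.sum_comm]
  rw [← sub_eq_zero, ← Finset.sum_sub_distrib]
  simp only [← Finset.sum_sub_distrib]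
  have h2 : ∀ a b : E, μ a * r a b * ((F a - F b) * H b) - μ a * r a b * ((H b - H a) * F a)
      = μ a * r a b * (F a * H a) - μ a * r a b * (F b * H b) := fun a b => by ring
  simp only [h2]
  simp only [Finset.sum_sub_distrib]
  rw [key_swap r μ hstat (fun z => F z * H z), sub_self]

lemma dirichlet_half (r : E → E → ℝ) (μ : E → ℝ)
    (hstat : ∀ y, ∑ x, μ x * r x y = μ y * ∑ x, r y x) (F : E → ℝ) :
    ∑ x, μ x * (-(Ld r F x)) * F x
      = (1/2) * ∑ x, ∑ y, μ x * r x y * (F y - F x)^2 := by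
  have h1 : ∑ x, μ x * (-(Ld r F x)) * F x = -(∑ x, μ x * Ld r F x * F x) := by
    rw [← Finset.sum_neg_distrib]; exact Finset.sum_congr rfl fun x _ => by ring
  rw [h1, sum_Ld_eq, ← sub_eq_zero]
  rw [Finset.mul_sum, ← Finset.sum_neg_distrib, ← Finset.sum_sub_distrib]
  have key := key_swap r μ hstat (fun z => F z * F z)
  have step : ∀ a : E, -(∑ y, μ a * r a y * ((F y - F a) * F a))
        - (1/2) * ∑ y, μ a * r a y * (F y - F a)^2
      = (1/2) * ((∑ y, μ a * r a y * (F a * F a)) - ∑ y, μ a * r a y * (F y * F y)) := by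
    intro a
    calc -(∑ y, μ a * r a y * ((F y - F a) * F a))
          - (1/2) * ∑ y, μ a * r a y * (F y - F a)^2
        = ∑ y, (-(μ a * r a y * ((F y - F a) * F a)) - (1/2) * (μ a * r a y * (F y - F a)^2)) := by
          rw [Finset.sum_sub_distrib, Finset.sum_neg_distrib, Finset.mul_sum]
      _ = ∑ y, (1/2) * (μ a * r a y * (F a * F a) - μ a * r a y * (F y * F y)) :=
          Finset.sum_congr rfl fun b _ => by ring
      _ = (1/2) * ((∑ y, μ a * r a y * (F a * F a)) - ∑ y, μ a * r a y * (F y * F y)) := by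
          rw [← Finset.mul_sum, Finset.sum_sub_distrib]
  calc ∑ a, (-(∑ y, μ a * r a y * ((F y - F a) * F a))
        - (1/2) * ∑ y, μ a * r a y * (F y - F a)^2)
      = ∑ a, (1/2) * ((∑ y, μ a * r a y * (F a * F a)) - ∑ y, μ a * r a y * (F y * F y)) :=
        Finset.sum_congr rfl fun a _ => step a
    _ = (1/2) * ((∑ a, ∑ y, μ a * r a y * (F a * F a)) - ∑ a, ∑ y, μ a * r a y * (F y * F y)) := by
        rw [← Finset.mul_sum, Finset.sum_sub_distrib]
    _ = 0 := by rw [← key, sub_self, mul_zero]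

lemma Ld_neg (q : E → E → ℝ) (F : E → ℝ) (x : E) :
    Ld q (fun y => -(F y)) x = -(Ld q F x) := by
  rw [Ld, Ld, ← Finset.sum_neg_distrib]
  exact Finset.sum_congr rfl fun y _ => by ring

lemma symOp_neg (r : E → E → ℝ) (μ : E → ℝ) (F : E → ℝ) (x : E) :
    symOp r μ (fun y => -(F y)) x = -(symOp r μ F x) := by
  rw [symOp, symOp, Ld_neg, Ld_neg]; ring

lemma dirichlet_nonneg (r : E → E → ℝ) (μ : E → ℝ) (hr : ∀ x y, 0 ≤ r x y)
    (hμ : ∀ x, 0 < μ x)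
    (hstat : ∀ y, ∑ x, μ x * r x y = μ y * ∑ x, r y x) (F : E → ℝ) :
    0 ≤ ∑ x, μ x * (-(Ld r F x)) * F x := by
  rw [dirichlet_half r μ hstat F]
  have : 0 ≤ ∑ x, ∑ y, μ x * r x y * (F y - F x)^2 :=
    Finset.sum_nonneg fun x _ => Finset.sum_nonneg fun y _ =>
      mul_nonneg (mul_nonneg (hμ x).le (hr x y)) (sq_nonneg _)
  linarith

lemma symOp_dirichlet (r : E → E → ℝ) (μ : E → ℝ) (hμ : ∀ x, 0 < μ x)
    (hstat : ∀ y, ∑ x, μ x * r x y = μ y * ∑ x, r y x) (F : E → ℝ) :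
    ∑ x, μ x * (-(symOp r μ F x)) * F x = ∑ x, μ x * (-(Ld r F x)) * F x := by
  have hadj := adj_pair r μ hμ hstat F F
  have h1 : ∑ x, μ x * (-(symOp r μ F x)) * F x
      = ∑ x, ((μ x * (-(Ld r F x)) * F x) / 2 + (μ x * (-(Ld (adjRates r μ) F x)) * F x) / 2) :=
    Finset.sum_congr rfl fun x _ => by rw [symOp]; ring
  have h2 : ∑ x, μ x * (-(Ld (adjRates r μ) F x)) * F x = ∑ x, μ x * (-(Ld r F x)) * F x := by
    have e1 : ∑ x, μ x * (-(Ld (adjRates r μ) F x)) * F x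
        = -(∑ x, μ x * Ld (adjRates r μ) F x * F x) := by
      rw [← Finset.sum_neg_distrib]; exact Finset.sum_congr rfl fun x _ => by ring
    have e2 : ∑ x, μ x * (-(Ld r F x)) * F x = -(∑ x, μ x * Ld r F x * F x) := by
      rw [← Finset.sum_neg_distrib]; exact Finset.sum_congr rfl fun x _ => by ring
    rw [e1, e2, hadj]
  rw [h1, Finset.sum_add_distrib, ← Finset.sum_div, ← Finset.sum_div, h2]
  ring

end Aux

/-- **Sector condition bound on the capacity.**
If the generator `L` of a finite irreducible chain satisfies the sector
condition `⟨L f, g⟩_μ² ≤ C₀ ⟨(-L) f, f⟩_μ ⟨(-L) g, g⟩_μ`, then for all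
disjoint `A`, `B`: `Cap^s(A,B) ≤ Cap(A,B) ≤ C₀ Cap^s(A,B)`, where
`Cap(A,B) = inf_F sup_H {2⟨L* F, H⟩_μ - ⟨H, (-S) H⟩_μ}` over `F` equal to
`1` on `A` and `0` on `B` and `H` constant on `A` and on `B`, and
`Cap^s(A,B) = inf_F ⟨(-S) F, F⟩_μ` over the same class of `F`. -/
theorem sector_condition_capacity_bound {E : Type*} [Fintype E] [DecidableEq E]
    (r : E → E → ℝ) (μ : E → ℝ) (A B : Finset E) (C₀ : ℝ) (hC₀ : 0 < C₀)
    (hA : A.Nonempty) (hB : B.Nonempty) (hAB : Disjoint A B)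
    (hr : ∀ x y, 0 ≤ r x y) (hrdiag : ∀ x, r x x = 0)
    (hμ : ∀ x, 0 < μ x)
    (hstat : ∀ y, ∑ x, μ x * r x y = μ y * ∑ x, r y x)
    (hirr : ∀ h : E → ℝ,
      (∀ x y, 0 < μ x * r x y + μ y * r y x → h x = h y) → ∀ x y, h x = h y)
    (hsector : ∀ f g : E → ℝ,
      (∑ x, μ x * Ld r f x * g x) ^ 2 ≤
        C₀ * (∑ x, μ x * (-(Ld r f x)) * f x) *
          (∑ x, μ x * (-(Ld r g x)) * g x)) :
    sInf { v : ℝ | ∃ F : E → ℝ, (∀ x ∈ A, F x = 1) ∧ (∀ x ∈ B, F x = 0) ∧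
        v = ∑ x, μ x * (-(symOp r μ F x)) * F x } ≤
      sInf { v : ℝ | ∃ F : E → ℝ, (∀ x ∈ A, F x = 1) ∧ (∀ x ∈ B, F x = 0) ∧
        v = sSup { w : ℝ | ∃ H : E → ℝ,
          (∀ x ∈ A, ∀ y ∈ A, H x = H y) ∧ (∀ x ∈ B, ∀ y ∈ B, H x = H y) ∧
          w = 2 * (∑ x, μ x * Ld (adjRates r μ) F x * H x) -
              ∑ x, μ x * H x * (-(symOp r μ H x)) } } ∧
    sInf { v : ℝ | ∃ F : E → ℝ, (∀ x ∈ A, F x = 1) ∧ (∀ x ∈ B, F x = 0) ∧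
        v = sSup { w : ℝ | ∃ H : E → ℝ,
          (∀ x ∈ A, ∀ y ∈ A, H x = H y) ∧ (∀ x ∈ B, ∀ y ∈ B, H x = H y) ∧
          w = 2 * (∑ x, μ x * Ld (adjRates r μ) F x * H x) -
              ∑ x, μ x * H x * (-(symOp r μ H x)) } } ≤
      C₀ * sInf { v : ℝ | ∃ F : E → ℝ, (∀ x ∈ A, F x = 1) ∧ (∀ x ∈ B, F x = 0) ∧
        v = ∑ x, μ x * (-(symOp r μ F x)) * F x } := by
  classical
  have hadj := adj_pair r μ hμ hstat
  have hDnn : ∀ F : E → ℝ, 0 ≤ ∑ x, μ x * (-(Ld r F x)) * F x :=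
    fun F => dirichlet_nonneg r μ hr hμ hstat F
  have hsymD : ∀ F : E → ℝ,
      ∑ x, μ x * (-(symOp r μ F x)) * F x = ∑ x, μ x * (-(Ld r F x)) * F x :=
    fun F => symOp_dirichlet r μ hμ hstat F
  have hsymD' : ∀ H : E → ℝ,
      ∑ x, μ x * H x * (-(symOp r μ H x)) = ∑ x, μ x * (-(Ld r H x)) * H x := by
    intro H
    rw [← hsymD H]
    exact Finset.sum_congr rfl fun x _ => by ring
  -- the W sets
  set W : (E → ℝ) → Set ℝ := fun F => { w : ℝ | ∃ H : E → ℝ,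
      (∀ x ∈ A, ∀ y ∈ A, H x = H y) ∧ (∀ x ∈ B, ∀ y ∈ B, H x = H y) ∧
      w = 2 * (∑ x, μ x * Ld (adjRates r μ) F x * H x) -
          ∑ x, μ x * H x * (-(symOp r μ H x)) } with hW
  have hWmem0 : ∀ F : E → ℝ, (0:ℝ) ∈ W F := by
    intro F
    refine ⟨fun _ => 0, fun _ _ _ _ => rfl, fun _ _ _ _ => rfl, ?_⟩
    simp
  have hWub : ∀ F : E → ℝ, ∀ w ∈ W F, w ≤ C₀ * ∑ x, μ x * (-(Ld r F x)) * F x := by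
    intro F w hw
    obtain ⟨H, -, -, rfl⟩ := hw
    rw [hadj F H, hsymD' H]
    have hs := hsector H F
    have h1 := hDnn H
    have h2 := hDnn F
    nlinarith [sq_nonneg (C₀ * (∑ x, μ x * (-(Ld r F x)) * F x)
      - ∑ x, μ x * (-(Ld r H x)) * H x), mul_nonneg hC₀.le h2, mul_nonneg hC₀.le h1,
      mul_nonneg (mul_nonneg hC₀.le h1) h2]
  have hWbdd : ∀ F : E → ℝ, BddAbove (W F) :=
    fun F => ⟨_, fun w hw => hWub F w hw⟩
  have hWmemD : ∀ F : E → ℝ, (∀ x ∈ A, F x = 1) → (∀ x ∈ B, F x = 0) →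
      (∑ x, μ x * (-(Ld r F x)) * F x) ∈ W F := by
    intro F hFA hFB
    refine ⟨fun x => -(F x), ?_, ?_, ?_⟩
    · intro x hx y hy; dsimp only; rw [hFA x hx, hFA y hy]
    · intro x hx y hy; dsimp only; rw [hFB x hx, hFB y hy]
    · dsimp only
      have eH : ∑ x, μ x * (-(F x)) * (-(symOp r μ (fun y => -(F y)) x))
          = ∑ x, μ x * (-(symOp r μ F x)) * F x :=
        Finset.sum_congr rfl fun x _ => by rw [symOp_neg]; ring
      have eL : ∑ x, μ x * Ld (adjRates r μ) F x * (-(F x))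
          = -(∑ x, μ x * Ld r F x * F x) := by
        have e0 : ∑ x, μ x * Ld (adjRates r μ) F x * (-(F x))
            = -(∑ x, μ x * Ld (adjRates r μ) F x * F x) := by
          rw [← Finset.sum_neg_distrib]
          exact Finset.sum_congr rfl fun x _ => by ring
        rw [e0, hadj F F]
      have eD : ∑ x, μ x * (-(Ld r F x)) * F x = -(∑ x, μ x * Ld r F x * F x) := by
        rw [← Finset.sum_neg_distrib]
        exact Finset.sum_congr rfl fun x _ => by ring
      rw [eL, eH, hsymD F, eD]
      ring
  -- the witness function
  set F₀ : E → ℝ := fun x => if x ∈ A then 1 else 0 with hF₀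
  have hF₀A : ∀ x ∈ A, F₀ x = 1 := fun x hx => if_pos hx
  have hF₀B : ∀ x ∈ B, F₀ x = 0 := fun x hx =>
    if_neg (fun h => Finset.disjoint_left.mp hAB h hx)
  have hS1ne : { v : ℝ | ∃ F : E → ℝ, (∀ x ∈ A, F x = 1) ∧ (∀ x ∈ B, F x = 0) ∧
      v = ∑ x, μ x * (-(symOp r μ F x)) * F x }.Nonempty :=
    ⟨_, F₀, hF₀A, hF₀B, rfl⟩
  have hS2ne : { v : ℝ | ∃ F : E → ℝ, (∀ x ∈ A, F x = 1) ∧ (∀ x ∈ B, F x = 0) ∧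
      v = sSup (W F) }.Nonempty := ⟨_, F₀, hF₀A, hF₀B, rfl⟩
  have hS1bdd : BddBelow { v : ℝ | ∃ F : E → ℝ, (∀ x ∈ A, F x = 1) ∧ (∀ x ∈ B, F x = 0) ∧
      v = ∑ x, μ x * (-(symOp r μ F x)) * F x } := by
    refine ⟨0, ?_⟩
    rintro v ⟨F, -, -, rfl⟩
    rw [hsymD F]; exact hDnn F
  have hS2bdd : BddBelow { v : ℝ | ∃ F : E → ℝ, (∀ x ∈ A, F x = 1) ∧ (∀ x ∈ B, F x = 0) ∧
      v = sSup (W F) } := by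
    refine ⟨0, ?_⟩
    rintro v ⟨F, -, -, rfl⟩
    exact le_csSup (hWbdd F) (hWmem0 F)
  constructor
  · refine le_csInf hS2ne ?_
    rintro v ⟨F, hFA, hFB, rfl⟩
    calc sInf { v : ℝ | ∃ F : E → ℝ, (∀ x ∈ A, F x = 1) ∧ (∀ x ∈ B, F x = 0) ∧
          v = ∑ x, μ x * (-(symOp r μ F x)) * F x }
        ≤ ∑ x, μ x * (-(symOp r μ F x)) * F x := csInf_le hS1bdd ⟨F, hFA, hFB, rfl⟩
      _ = ∑ x, μ x * (-(Ld r F x)) * F x := hsymD F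
      _ ≤ sSup (W F) := le_csSup (hWbdd F) (hWmemD F hFA hFB)
  · rw [← div_le_iff₀' hC₀]
    refine le_csInf hS1ne ?_
    rintro v ⟨F, hFA, hFB, rfl⟩
    rw [div_le_iff₀' hC₀]
    calc sInf { v : ℝ | ∃ F : E → ℝ, (∀ x ∈ A, F x = 1) ∧ (∀ x ∈ B, F x = 0) ∧
          v = sSup (W F) }
        ≤ sSup (W F) := csInf_le hS2bdd ⟨F, hFA, hFB, rfl⟩
      _ ≤ C₀ * ∑ x, μ x * (-(Ld r F x)) * F x :=
          csSup_le ⟨0, hWmem0 F⟩ (fun w hw => hWub F w hw)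
      _ = C₀ * ∑ x, μ x * (-(symOp r μ F x)) * F x := by rw [hsymD F]
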